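/- arXiv:1402.2331 — 4 statements merged into one kernel-verified Lean document; each statement's English description precedes it below -/
import Mathlib

section
/- Let a_1,…,a_n be positive reals with Σ a_i = 1 and suppose I ⊆ [n] satisfies Σ_{i∈I} a_i = Σ_{i∉I} a_i. Define θ_1 = 0 and θ_{m} = Σ_{i∈I, i<m} a_i − Σ_{i∉I, i<m} a_i for m = 2,…,n. Set u_{(i,1)} = (cos θ_i, sin θ_i), u_{(i,2)} = (sin θ_i, −cos θ_i) ∈ ℝ². Then for every i ∈ [n] (indices mod n): ⟨u_{(i,1)}, u_{(i+1,1)}⟩ = cos a_i, ⟨u_{(i,2)}, u_{(i+1,2)}⟩ = cos a_i, ‖u_{(i,1)}‖ = ‖u_{(i,2)}‖ = 1, and ⟨u_{(i,1)}, u_{(i,2)}⟩ = 0. -/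
open scoped RealInnerProductSpace

/-- Completeness of the Partition reduction: a partition I of a_1,…,a_n
(positive, summing to 1) yields, via rotation angles θ, unit vectors
u_{(i,1)} = (cos θ_i, sin θ_i), u_{(i,2)} = (sin θ_i, −cos θ_i) in ℝ² that form orthonormal
pairs with ⟨u_{(i,1)}, u_{(i+1,1)}⟩ = ⟨u_{(i,2)}, u_{(i+1,2)}⟩ = cos a_i (indices mod n). -/
theorem stmt11 (n : ℕ) [NeZero n] (a : Fin n → ℝ) (I : Finset (Fin n))
    (ha : ∀ i, 0 < a i) (hsum : ∑ i, a i = 1)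
    (hpart : ∑ i ∈ I, a i = ∑ i ∈ Iᶜ, a i)
    (θ : Fin n → ℝ)
    (hθ : ∀ m, θ m = ∑ i ∈ Finset.univ.filter (fun i => i < m ∧ i ∈ I), a i
                   - ∑ i ∈ Finset.univ.filter (fun i => i < m ∧ i ∉ I), a i)
    (u₁ u₂ : Fin n → EuclideanSpace ℝ (Fin 2))
    (hu₁ : ∀ i, u₁ i 0 = Real.cos (θ i) ∧ u₁ i 1 = Real.sin (θ i))
    (hu₂ : ∀ i, u₂ i 0 = Real.sin (θ i) ∧ u₂ i 1 = -Real.cos (θ i)) :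
    ∀ i : Fin n,
      ⟪u₁ i, u₁ (i + 1)⟫ = Real.cos (a i) ∧
      ⟪u₂ i, u₂ (i + 1)⟫ = Real.cos (a i) ∧
      ‖u₁ i‖ = 1 ∧ ‖u₂ i‖ = 1 ∧ ⟪u₁ i, u₂ i⟫ = 0 := by
  obtain ⟨m, rfl⟩ := Nat.exists_eq_succ_of_ne_zero (NeZero.ne n)
  set f : Fin (m + 1) → ℝ := fun j => if j ∈ I then a j else -a j with hf
  have hS : ∑ j, f j = 0 := by
    simp only [hf, Finset.sum_ite, Finset.sum_neg_distrib]
    rw [Finset.filter_mem_eq_inter, Finset.univ_inter]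
    have : Finset.univ.filter (fun j => ¬ j ∈ I) = Iᶜ := by
      ext j; simp
    rw [this]
    linarith [hpart]
  have hθf : ∀ mm, θ mm = ∑ j ∈ Finset.univ.filter (· < mm), f j := by
    intro mm
    rw [hθ mm, Finset.sum_ite (f := a) (g := fun j => -a j) (p := (· ∈ I))]
    simp only [Finset.filter_filter, Finset.sum_neg_distrib]
    ring_nf
  have key : ∀ i : Fin (m + 1), θ (i + 1) - θ i = f i := by
    intro i
    by_cases hi : (i : ℕ) + 1 < m + 1
    · have h1 : ((i + 1 : Fin (m + 1)) : ℕ) = (i : ℕ) + 1 := by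
        rw [Fin.val_add_one]
        have : i ≠ Fin.last m := by
          intro h; rw [h] at hi; simp [Fin.last] at hi
        simp [this]
      have hset : Finset.univ.filter (· < i + 1)
          = insert i (Finset.univ.filter (· < i)) := by
        ext j
        simp only [Finset.mem_filter, Finset.mem_insert, Finset.mem_univ, true_and,
          Fin.lt_def, h1]
        constructor
        · intro h
          rcases Nat.lt_succ_iff_lt_or_eq.mp h with h | h
          · right; exact h
          · left; exact Fin.ext h
        · rintro (rfl | h) <;> omega
      rw [hθf, hθf, hset, Finset.sum_insert (by simp)]
      ring
    · have hlast : i = Fin.last m := Fin.ext (by have := i.isLt; simp [Fin.last]; omega)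
      subst hlast
      have h0 : Fin.last m + 1 = 0 := Fin.last_add_one m
      have hz : θ (Fin.last m + 1) = 0 := by
        rw [h0, hθf]
        have : Finset.univ.filter (· < (0 : Fin (m + 1))) = ∅ := by
          ext j; simp [Fin.not_lt_zero]
        rw [this, Finset.sum_empty]
      have hset : Finset.univ.filter (· < Fin.last m) = Finset.univ.erase (Fin.last m) := by
        ext j
        simp only [Finset.mem_filter, Finset.mem_univ, true_and, Finset.mem_erase, and_true]
        rw [Fin.lt_def]
        constructor
        · intro h heq
          rw [heq] at h
          exact lt_irrefl _ h
        · intro hne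
          have hv : (j : ℕ) ≠ (Fin.last m : ℕ) := fun h => hne (Fin.ext h)
          have := j.isLt
          simp [Fin.last] at hv ⊢
          omega
      have hθi : θ (Fin.last m) = -f (Fin.last m) := by
        rw [hθf, hset, Finset.sum_erase_eq_sub (Finset.mem_univ (Fin.last m)), hS]
        ring
      rw [hz, hθi]; ring
  have hcos : ∀ i, Real.cos (θ (i + 1)) * Real.cos (θ i)
      + Real.sin (θ (i + 1)) * Real.sin (θ i) = Real.cos (a i) := by
    intro i
    rw [← Real.cos_sub, key i]
    by_cases h : i ∈ I <;> simp [hf, h, Real.cos_neg]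
  have hinner : ∀ x y : EuclideanSpace ℝ (Fin 2), ⟪x, y⟫ = x 0 * y 0 + x 1 * y 1 := by
    intro x y
    simp [PiLp.inner_apply, Fin.sum_univ_two, RCLike.inner_apply, conj_trivial]
    ring
  intro i
  obtain ⟨h10, h11⟩ := hu₁ i
  obtain ⟨h10', h11'⟩ := hu₁ (i + 1)
  obtain ⟨h20, h21⟩ := hu₂ i
  obtain ⟨h20', h21'⟩ := hu₂ (i + 1)
  refine ⟨?_, ?_, ?_, ?_, ?_⟩
  · rw [hinner, h10, h11, h10', h11']
    linear_combination hcos i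
  · rw [hinner, h20, h21, h20', h21']
    linear_combination hcos i
  · rw [EuclideanSpace.norm_eq]
    have : ∑ j, ‖u₁ i j‖ ^ 2 = 1 := by
      rw [Fin.sum_univ_two, h10, h11]
      simp [Real.norm_eq_abs, sq_abs, Real.cos_sq_add_sin_sq]
    rw [this, Real.sqrt_one]
  · rw [EuclideanSpace.norm_eq]
    have : ∑ j, ‖u₂ i j‖ ^ 2 = 1 := by
      rw [Fin.sum_univ_two, h20, h21]
      simp [Real.norm_eq_abs, sq_abs]
    rw [this, Real.sqrt_one]
  · rw [hinner, h10, h11, h20, h21]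
    ring
end

section
/- Let u_1,…,u_n ∈ ℝ² be unit vectors such that ⟨u_i, u_{i+1}⟩ = cos a_i for i = 1,…,n−1 and ⟨u_n, u_1⟩ = cos a_n, where a_1,…,a_n > 0 and Σ a_i = 1. Then there exist signs s_1,…,s_n ∈ {−1,+1} with Σ_{j=1}^n s_j a_j = 0. -/
open scoped RealInnerProductSpace

noncomputable section

local instance factFinrank : Fact (Module.finrank ℝ (EuclideanSpace ℝ (Fin 2)) = 2) :=
  ⟨finrank_euclideanSpace_fin⟩

/-- Soundness of the Partition reduction: unit vectors u_1,…,u_n in ℝ² with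
⟨u_i, u_{i+1}⟩ = cos a_i around the cycle, where a_i > 0 and Σ a_i = 1, give signs
s ∈ {±1}^n with Σ s_j a_j = 0. -/
theorem stmt12 (n : ℕ) [NeZero n] (a : Fin n → ℝ)
    (u : Fin n → EuclideanSpace ℝ (Fin 2))
    (ha : ∀ i, 0 < a i) (hsum : ∑ i, a i = 1)
    (hnorm : ∀ i, ‖u i‖ = 1)
    (hangle : ∀ i : Fin n, ⟪u i, u (i + 1)⟫ = Real.cos (a i)) :
    ∃ s : Fin n → ℝ, (∀ i, s i = 1 ∨ s i = -1) ∧ ∑ i, s i * a i = 0 := by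
  set o : Orientation ℝ (EuclideanSpace ℝ (Fin 2)) (Fin 2) :=
    (EuclideanSpace.basisFun (Fin 2) ℝ).toBasis.orientation with ho
  have hune : ∀ i, u i ≠ 0 := fun i => by
    intro h; have := hnorm i; rw [h] at this; simp at this
  -- each oriented angle is ± a i
  have key : ∀ i : Fin n, o.oangle (u i) (u (i + 1)) = (a i : Real.Angle) ∨
      o.oangle (u i) (u (i + 1)) = ((-a i : ℝ) : Real.Angle) := by
    intro i
    have hc : Real.Angle.cos (o.oangle (u i) (u (i + 1))) = Real.cos (a i) := by
      rw [o.cos_oangle_eq_inner_div_norm_mul_norm (hune i) (hune (i + 1)),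
        hnorm i, hnorm (i + 1)]
      simp [hangle i]
    have := Real.Angle.cos_eq_real_cos_iff_eq_or_eq_neg.mp hc
    rcases this with h | h
    · exact Or.inl h
    · exact Or.inr (by rw [h, Real.Angle.coe_neg])
  -- define sign function
  classical
  refine ⟨fun i => if o.oangle (u i) (u (i + 1)) = (a i : Real.Angle) then 1 else -1,
    fun i => by dsimp only; split <;> simp, ?_⟩
  -- the angle sum telescopes to zero
  have htel : ∑ i : Fin n, o.oangle (u i) (u (i + 1)) = 0 := by
    have : ∀ i : Fin n, o.oangle (u i) (u (i + 1)) =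
        o.oangle (u 0) (u (i + 1)) - o.oangle (u 0) (u i) := by
      intro i
      rw [eq_sub_iff_add_eq, add_comm, o.oangle_add (hune 0) (hune i) (hune (i + 1))]
    rw [Finset.sum_congr rfl fun i _ => this i, Finset.sum_sub_distrib]
    rw [Fintype.sum_equiv (Equiv.addRight (1 : Fin n))
      (fun x => o.oangle (u 0) (u (x + 1))) (fun x => o.oangle (u 0) (u x)) (fun i => rfl)]
    exact sub_self _
  -- coerce sum of reals
  have hcoe : ((∑ i : Fin n, (if o.oangle (u i) (u (i + 1)) = (a i : Real.Angle)
      then (1:ℝ) else -1) * a i : ℝ) : Real.Angle) = 0 := by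
    rw [show ((↑) : ℝ → Real.Angle) = Real.Angle.coeHom from rfl, map_sum, ← htel]
    refine Finset.sum_congr rfl fun i _ => ?_
    split_ifs with h
    · rw [h]; norm_num
    · rcases key i with h' | h'
      · exact absurd h' h
      · rw [h', Real.Angle.coe_neg]; ring_nf; exact Real.Angle.coe_neg _
  set S : ℝ := ∑ i : Fin n, (if o.oangle (u i) (u (i + 1)) = (a i : Real.Angle)
      then (1:ℝ) else -1) * a i with hS
  have hbound : |S| ≤ 1 := by
    rw [hS]
    calc |∑ i : Fin n, (if o.oangle (u i) (u (i + 1)) = (a i : Real.Angle)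
        then (1:ℝ) else -1) * a i| ≤ ∑ i : Fin n, |(if o.oangle (u i) (u (i + 1)) = (a i : Real.Angle)
        then (1:ℝ) else -1) * a i| := Finset.abs_sum_le_sum_abs _ _
      _ = ∑ i : Fin n, a i := by
          refine Finset.sum_congr rfl fun i _ => ?_
          rw [abs_mul, abs_of_pos (ha i)]
          split <;> norm_num
      _ = 1 := hsum
  -- S ≡ 0 mod 2π and |S| ≤ 1 < 2π gives S = 0
  have : (S : Real.Angle) = (0 : ℝ) := by exact_mod_cast hcoe
  rw [Real.Angle.angle_eq_iff_two_pi_dvd_sub] at this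
  obtain ⟨k, hk⟩ := this
  rw [sub_zero] at hk
  have hpi : (2 : ℝ) ≤ 2 * Real.pi := by nlinarith [Real.pi_gt_three]
  have hk0 : k = 0 := by
    by_contra hk0
    have h1 : (1 : ℝ) ≤ |(k : ℝ)| := by
      exact_mod_cast (by exact_mod_cast Int.one_le_abs hk0 : (1:ℝ) ≤ (|k| : ℝ))
    have : 2 * Real.pi * 1 ≤ |S| := by
      rw [hk, abs_mul, abs_of_pos (by positivity : (0:ℝ) < 2 * Real.pi)]
      nlinarith [Real.pi_pos]
    nlinarith [Real.pi_gt_three]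
  rw [hk0] at hk
  simpa using hk

end
end

section
/- Let u_1,…,u_d ∈ ℝ^r be vectors with |⟨u_i, u_j⟩ − δ_{ij}| ≤ ε for all i, j, where 0 ≤ ε < 1 is sufficiently small (ε < O(1/d) suffices). Then the Gram–Schmidt orthonormalization ũ_1,…,ũ_d of u_1,…,u_d satisfies ‖ũ_i − u_i‖ ≤ ε(1 + 2√d) for each i. -/
open scoped RealInnerProductSpace


variable {E : Type*} [NormedAddCommGroup E] [InnerProductSpace ℝ E]

noncomputable def gs (u : ℕ → E) : ℕ → E
  | n =>
    ‖u n - ∑ j : Fin n, ⟪gs u j, u n⟫ • gs u j‖⁻¹ •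
      (u n - ∑ j : Fin n, ⟪gs u j, u n⟫ • gs u j)
  decreasing_by all_goals exact j.isLt

lemma inner_ortho_sum (n : ℕ) (g : ℕ → E) (c : ℕ → ℝ)
    (hg1 : ∀ j, j < n → ‖g j‖ = 1)
    (hgo : ∀ i, i < n → ∀ j, j < n → i ≠ j → ⟪g i, g j⟫ = 0)
    (m : ℕ) (hm : m < n) :
    ⟪g m, ∑ j : Fin n, c j • g j⟫ = c m := by
  rw [inner_sum]
  have h1 : ∀ j : Fin n, ⟪g m, c j • g (j:ℕ)⟫ = c j * ⟪g m, g (j:ℕ)⟫ := by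
    intro j; rw [real_inner_smul_right]
  simp_rw [h1]
  rw [Finset.sum_eq_single (⟨m, hm⟩ : Fin n)]
  · have : ⟪g m, g m⟫ = 1 := by
      rw [real_inner_self_eq_norm_sq, hg1 m hm]; norm_num
    simp [this, hg1 m hm]
  · intro b _ hb
    have hbm : m ≠ (b : ℕ) := by
      intro h; exact hb (Fin.ext h.symm)
    rw [hgo m hm b b.isLt hbm]; ring
  · intro h; exact absurd (Finset.mem_univ _) h

lemma sum_sq_inner (n : ℕ) (g : ℕ → E) (c : ℕ → ℝ)
    (hg1 : ∀ j, j < n → ‖g j‖ = 1)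
    (hgo : ∀ i, i < n → ∀ j, j < n → i ≠ j → ⟪g i, g j⟫ = 0) :
    ‖∑ j : Fin n, c j • g j‖^2 = ∑ j : Fin n, (c (j:ℕ))^2 := by
  rw [← real_inner_self_eq_norm_sq, sum_inner]
  refine Finset.sum_congr rfl (fun j _ => ?_)
  rw [real_inner_smul_left, inner_ortho_sum n g c hg1 hgo j j.isLt]
  ring

set_option maxHeartbeats 1000000 in
lemma gs_main (u : ℕ → E) (d : ℕ) (ε : ℝ) (hε0 : 0 ≤ ε) (hε1 : ε ≤ 1/8)
    (hdε : (d:ℝ) * ε ≤ 1/8)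
    (hu : ∀ i j, i < d → j < d → |⟪u i, u j⟫ - (if i = j then (1:ℝ) else 0)| ≤ ε) :
    ∀ n, n < d → ‖gs u n‖ = 1 ∧ (∀ m, m < n → ⟪gs u m, gs u n⟫ = 0) ∧
      (∀ k, n < k → k < d → |⟪gs u n, u k⟫| ≤ 2*ε) ∧
      ‖gs u n - u n‖ ≤ ε * (1 + 2 * Real.sqrt d) := by
  intro n
  induction n using Nat.strong_induction_on with
  | _ n IH =>
  intro hn
  -- facts from IH
  have hg1 : ∀ j, j < n → ‖gs u j‖ = 1 := fun j hj => (IH j hj (hj.trans hn)).1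
  have hgo : ∀ i, i < n → ∀ j, j < n → i ≠ j → ⟪gs u i, gs u j⟫ = 0 := by
    intro i hi j hj hij
    rcases hij.lt_or_gt with h | h
    · exact (IH j hj (hj.trans hn)).2.1 i h
    · rw [real_inner_comm]; exact (IH i hi (hi.trans hn)).2.1 j h
  set c : ℕ → ℝ := fun j => ⟪gs u j, u n⟫ with hc_def
  have hc : ∀ j, j < n → |c j| ≤ 2*ε := fun j hj =>
    (IH j hj (hj.trans hn)).2.2.1 n hj hn
  set S : E := ∑ j : Fin n, c (j:ℕ) • gs u (j:ℕ) with hS_def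
  set w : E := u n - S with hw_def
  have hgs_eq : gs u n = ‖w‖⁻¹ • w := by rw [gs]
  -- sum of squares bound
  have hcard : ((Finset.univ : Finset (Fin n)).card : ℝ) = n := by simp
  have hsum_sq : ∑ j : Fin n, (c (j:ℕ))^2 ≤ ε/2 := by
    have h1 : ∑ j : Fin n, (c (j:ℕ))^2 ≤ (n:ℝ) * (2*ε)^2 := by
      calc ∑ j : Fin n, (c (j:ℕ))^2 ≤ ∑ _j : Fin n, (2*ε)^2 := by
            refine Finset.sum_le_sum (fun j _ => ?_)
            have := hc j j.isLt
            nlinarith [abs_nonneg (c (j:ℕ)), sq_abs (c (j:ℕ))]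
        _ = (n:ℝ) * (2*ε)^2 := by rw [Finset.sum_const, nsmul_eq_mul]; simp
    have hnd : (n:ℝ) ≤ d := by exact_mod_cast hn.le
    have hne : (n:ℝ)*ε ≤ 1/8 := le_trans (mul_le_mul_of_nonneg_right hnd hε0) hdε
    nlinarith
  have hSsq : ‖S‖^2 = ∑ j : Fin n, (c (j:ℕ))^2 := sum_sq_inner n (gs u) c hg1 hgo
  -- ‖w‖² = ‖u n‖² - ∑ c²
  have huS : ⟪u n, S⟫ = ∑ j : Fin n, (c (j:ℕ))^2 := by
    rw [hS_def, inner_sum]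
    refine Finset.sum_congr rfl (fun j _ => ?_)
    rw [real_inner_smul_right, real_inner_comm]
    rw [hc_def]; ring
  have hwsq : ‖w‖^2 = ‖u n‖^2 - ∑ j : Fin n, (c (j:ℕ))^2 := by
    rw [hw_def, norm_sub_sq_real, huS, hSsq]; ring
  have h_un : |‖u n‖^2 - 1| ≤ ε := by
    have := hu n n hn hn
    rw [if_pos rfl] at this
    rwa [real_inner_self_eq_norm_sq] at this
  rw [abs_le] at h_un
  have hw_lo : 13/16 ≤ ‖w‖^2 := by
    rw [hwsq]; nlinarith [Finset.sum_nonneg (fun (j : Fin n) (_ : j ∈ Finset.univ) => sq_nonneg (c (j:ℕ)))]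
  have hw_hi : ‖w‖^2 ≤ 1 + ε := by
    rw [hwsq]
    nlinarith [Finset.sum_nonneg (fun (j : Fin n) (_ : j ∈ Finset.univ) => sq_nonneg (c (j:ℕ)))]
  have hw34 : 3/4 ≤ ‖w‖ := by nlinarith [norm_nonneg w]
  have hwpos : (0:ℝ) < ‖w‖ := by linarith
  have hwne : ‖w‖ ≠ 0 := ne_of_gt hwpos
  have hmS : ∀ m, m < n → ⟪gs u m, S⟫ = c m := by
    intro m hm
    rw [hS_def]; exact inner_ortho_sum n (gs u) c hg1 hgo m hm
  have hSk_all : ∀ k : ℕ, ⟪S, u k⟫ = ∑ j : Fin n, c (j:ℕ) * ⟪gs u (j:ℕ), u k⟫ := by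
    intro k
    rw [hS_def, sum_inner]
    exact Finset.sum_congr rfl (fun j _ => by rw [real_inner_smul_left])
  have hcm : ∀ m, c m = ⟪gs u m, u n⟫ := fun m => rfl
  clear_value c S w
  -- (A)
  have hA : ‖gs u n‖ = 1 := by
    rw [hgs_eq, norm_smul, Real.norm_eq_abs, abs_inv, abs_norm, inv_mul_cancel₀ hwne]
  -- (B)
  have hB : ∀ m, m < n → ⟪gs u m, gs u n⟫ = 0 := by
    intro m hm
    rw [hgs_eq, real_inner_smul_right, hw_def, inner_sub_right, hmS m hm, ← hcm m]
    simp
  -- (C)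
  have hC : ∀ k, n < k → k < d → |⟪gs u n, u k⟫| ≤ 2*ε := by
    intro k hnk hkd
    have hSk := hSk_all k
    have hSk_bd : |⟪S, u k⟫| ≤ ε/2 := by
      rw [hSk]
      calc |∑ j : Fin n, c (j:ℕ) * ⟪gs u (j:ℕ), u k⟫|
          ≤ ∑ j : Fin n, |c (j:ℕ) * ⟪gs u (j:ℕ), u k⟫| := Finset.abs_sum_le_sum_abs _ _
        _ ≤ ∑ _j : Fin n, (2*ε)*(2*ε) := by
            refine Finset.sum_le_sum (fun j _ => ?_)
            rw [abs_mul]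
            have h1 := hc j j.isLt
            have h2 := (IH j j.isLt (j.isLt.trans hn)).2.2.1 k (j.isLt.trans hnk) hkd
            exact mul_le_mul h1 h2 (abs_nonneg _) (by linarith)
        _ = (n:ℝ) * ((2*ε)*(2*ε)) := by rw [Finset.sum_const, nsmul_eq_mul]; simp
        _ ≤ ε/2 := by
            have hnd : (n:ℝ) ≤ d := by exact_mod_cast hn.le
            have hne : (n:ℝ)*ε ≤ 1/8 := le_trans (mul_le_mul_of_nonneg_right hnd hε0) hdε
            nlinarith
    have hnk_bd : |⟪u n, u k⟫| ≤ ε := by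
      have := hu n k hn hkd
      rw [if_neg (Nat.ne_of_lt hnk)] at this
      simpa using this
    have hwk : ⟪w, u k⟫ = ⟪u n, u k⟫ - ⟪S, u k⟫ := by
      rw [hw_def, inner_sub_left]
    have hwk_bd : |⟪w, u k⟫| ≤ 3/2 * ε := by
      rw [hwk]
      calc |⟪u n, u k⟫ - ⟪S, u k⟫| ≤ |⟪u n, u k⟫| + |⟪S, u k⟫| := abs_sub _ _
        _ ≤ 3/2 * ε := by linarith
    rw [hgs_eq, real_inner_smul_left, abs_mul, abs_inv, abs_norm]
    have hinv : ‖w‖⁻¹ ≤ 4/3 := by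
      rw [inv_le_comm₀ hwpos (by norm_num)]; linarith
    calc ‖w‖⁻¹ * |⟪w, u k⟫| ≤ (4/3) * (3/2 * ε) :=
          mul_le_mul hinv hwk_bd (abs_nonneg _) (by norm_num)
      _ = 2*ε := by ring
  -- (D)
  have hD : ‖gs u n - u n‖ ≤ ε * (1 + 2 * Real.sqrt d) := by
    have hsplit : gs u n - u n = (‖w‖⁻¹ • w - w) + (w - u n) := by
      rw [hgs_eq]; abel
    have h1 : ‖‖w‖⁻¹ • w - w‖ = |1 - ‖w‖| := by
      have : ‖w‖⁻¹ • w - w = (‖w‖⁻¹ - 1) • w := by rw [sub_smul, one_smul]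
      rw [this, norm_smul, Real.norm_eq_abs, ← abs_of_nonneg (norm_nonneg w), ← abs_mul,
        abs_norm, sub_mul, inv_mul_cancel₀ hwne, one_mul]
    have h1bd : |1 - ‖w‖| ≤ ε := by
      rw [abs_le]
      constructor
      · nlinarith
      · nlinarith
    have h2 : ‖w - u n‖ = ‖S‖ := by
      rw [hw_def]; rw [show u n - S - u n = -S by abel, norm_neg]
    have h2bd : ‖S‖ ≤ 2 * ε * Real.sqrt d := by
      have hd : Real.sqrt d ^ 2 = d := Real.sq_sqrt (Nat.cast_nonneg d)
      have hnd : (n:ℝ) ≤ d := by exact_mod_cast hn.le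
      have hS2 : ‖S‖^2 ≤ (2 * ε * Real.sqrt d)^2 := by
        rw [hSsq] at *
        have h1 : ∑ j : Fin n, (c (j:ℕ))^2 ≤ (n:ℝ) * (2*ε)^2 := by
          calc ∑ j : Fin n, (c (j:ℕ))^2 ≤ ∑ _j : Fin n, (2*ε)^2 := by
                refine Finset.sum_le_sum (fun j _ => ?_)
                have := hc j j.isLt
                nlinarith [abs_nonneg (c (j:ℕ)), sq_abs (c (j:ℕ))]
            _ = (n:ℝ) * (2*ε)^2 := by rw [Finset.sum_const, nsmul_eq_mul]; simp
        nlinarith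
      nlinarith [norm_nonneg S, Real.sqrt_nonneg (d:ℝ), mul_nonneg (mul_nonneg (by norm_num : (0:ℝ) ≤ 2) hε0) (Real.sqrt_nonneg (d:ℝ))]
    calc ‖gs u n - u n‖ ≤ ‖‖w‖⁻¹ • w - w‖ + ‖w - u n‖ := by
          rw [hsplit]; exact norm_add_le _ _
      _ ≤ ε + 2 * ε * Real.sqrt d := by rw [h1, h2]; exact add_le_add h1bd h2bd
      _ = ε * (1 + 2 * Real.sqrt d) := by ring
  exact ⟨hA, hB, hC, hD⟩

/-- If u_1,…,u_d are ε-nearly orthonormal (|⟨u_i,u_j⟩ − δ_{ij}| ≤ ε) with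
ε < O(1/d) sufficiently small, then there is an (Gram–Schmidt) orthonormal family
ũ_1,…,ũ_d with ‖ũ_i − u_i‖ ≤ ε(1 + 2√d) for each i. -/
theorem stmt13 :
    ∃ C : ℝ, 0 < C ∧
      ∀ (d r : ℕ) (u : Fin d → EuclideanSpace ℝ (Fin r)) (ε : ℝ),
        0 ≤ ε → ε < C / d →
        (∀ i j, |⟪u i, u j⟫ - (if i = j then (1 : ℝ) else 0)| ≤ ε) →
        ∃ v : Fin d → EuclideanSpace ℝ (Fin r),
          (∀ i j, ⟪v i, v j⟫ = (if i = j then (1 : ℝ) else 0)) ∧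
          ∀ i, ‖v i - u i‖ ≤ ε * (1 + 2 * Real.sqrt d) := by
  refine ⟨1/8, by norm_num, ?_⟩
  intro d r u ε hε0 hεC hu
  rcases Nat.eq_zero_or_pos d with rfl | hd
  · exact ⟨fun i => i.elim0, fun i => i.elim0, fun i => i.elim0⟩
  have hdpos : (0:ℝ) < d := by exact_mod_cast hd
  rw [lt_div_iff₀ hdpos] at hεC
  have hdε : (d:ℝ) * ε ≤ 1/8 := by nlinarith
  have hd1 : (1:ℝ) ≤ d := by exact_mod_cast hd
  have hε1 : ε ≤ 1/8 := by nlinarith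
  set U : ℕ → EuclideanSpace ℝ (Fin r) := fun n => if h : n < d then u ⟨n, h⟩ else 0
    with hU
  have hU_eq : ∀ i : Fin d, U (i:ℕ) = u i := by
    intro i; simp only [hU, dif_pos i.isLt]
  have hu' : ∀ i j, i < d → j < d →
      |⟪U i, U j⟫ - (if i = j then (1:ℝ) else 0)| ≤ ε := by
    intro i j hi hj
    have h := hu ⟨i, hi⟩ ⟨j, hj⟩
    simp only [hU, dif_pos hi, dif_pos hj]
    by_cases hij : i = j
    · subst hij
      rw [if_pos rfl]
      rwa [if_pos rfl] at h
    · rw [if_neg hij]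
      rwa [if_neg (fun hc => hij (by simpa [Fin.ext_iff] using hc))] at h
  have key := gs_main U d ε hε0 hε1 hdε hu'
  refine ⟨fun i => gs U (i:ℕ), ?_, ?_⟩
  · intro i j
    rcases lt_trichotomy (i:ℕ) (j:ℕ) with h | h | h
    · rw [if_neg (fun hc => absurd (congrArg Fin.val hc) (Nat.ne_of_lt h))]
      exact (key j j.isLt).2.1 i h
    · have hij : i = j := Fin.ext h
      subst hij
      rw [if_pos rfl, real_inner_self_eq_norm_sq, (key i i.isLt).1]
      norm_num
    · rw [if_neg (fun hc => absurd (congrArg Fin.val hc) (Nat.ne_of_gt h))]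
      rw [real_inner_comm]
      exact (key i i.isLt).2.1 j h
  · intro i
    have h := (key i i.isLt).2.2.2
    rwa [hU_eq i] at h
end

section
/- Let u_1, u_2 ∈ ℝ^r be unit vectors with ⟨u_1, u_2⟩ = 0, and suppose w ∈ ℝ^r satisfies ‖w‖ ≤ √(1+ε), |⟨w, u_1⟩ − 1/√2| ≤ ε, and |⟨w, u_2⟩ − 1/√2| ≤ ε for some 0 ≤ ε ≤ 1. Then ‖w − (u_1 + u_2)/√2‖ ≤ √(ε(3 + 2√2)). -/
open scoped RealInnerProductSpace

/-- If u₁, u₂ are orthonormal, ‖w‖ ≤ √(1+ε), and ⟨w,u₁⟩, ⟨w,u₂⟩ are within ε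
of 1/√2, then ‖w − (u₁+u₂)/√2‖ ≤ √(ε(3 + 2√2)). -/
theorem stmt15 (d : ℕ) (u₁ u₂ w : EuclideanSpace ℝ (Fin d)) (ε : ℝ)
    (hε0 : 0 ≤ ε) (hε1 : ε ≤ 1)
    (h1 : ‖u₁‖ = 1) (h2 : ‖u₂‖ = 1) (horth : ⟪u₁, u₂⟫ = 0)
    (hw : ‖w‖ ≤ Real.sqrt (1 + ε))
    (hw1 : |⟪w, u₁⟫ - 1 / Real.sqrt 2| ≤ ε)
    (hw2 : |⟪w, u₂⟫ - 1 / Real.sqrt 2| ≤ ε) :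
    ‖w - (Real.sqrt 2)⁻¹ • (u₁ + u₂)‖ ≤ Real.sqrt (ε * (3 + 2 * Real.sqrt 2)) := by
  have hs2 : Real.sqrt 2 * Real.sqrt 2 = 2 := Real.mul_self_sqrt (by norm_num)
  have hs2pos : (0:ℝ) < Real.sqrt 2 := by positivity
  have hwsq : ‖w‖ ^ 2 ≤ 1 + ε := by
    have h := Real.sq_sqrt (by linarith : (0:ℝ) ≤ 1 + ε)
    nlinarith [norm_nonneg w, Real.sqrt_nonneg (1 + ε)]
  have ha : 1 / Real.sqrt 2 - ε ≤ ⟪w, u₁⟫ := by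
    have := abs_le.1 hw1; linarith [this.2, this.1]
  have hb : 1 / Real.sqrt 2 - ε ≤ ⟪w, u₂⟫ := by
    have := abs_le.1 hw2; linarith [this.2, this.1]
  have expand : ‖w - (Real.sqrt 2)⁻¹ • (u₁ + u₂)‖ ^ 2
      = ‖w‖ ^ 2 + 1 - Real.sqrt 2 * (⟪w, u₁⟫ + ⟪w, u₂⟫) := by
    rw [@norm_sub_sq_real, inner_smul_right, inner_add_right, norm_smul, mul_pow,
      norm_add_sq_real, horth, h1, h2]
    rw [Real.norm_eq_abs, abs_of_pos (by positivity)]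
    set A := ⟪w, u₁⟫; set B := ⟪w, u₂⟫
    have hinv : (Real.sqrt 2)⁻¹ = Real.sqrt 2 / 2 := by
      rw [eq_div_iff (by norm_num : (2:ℝ) ≠ 0)]
      field_simp
      rw [Real.sq_sqrt (by norm_num : (0:ℝ) ≤ 2)]
    rw [hinv]
    ring_nf
    nlinarith [hs2]
  have key : ‖w - (Real.sqrt 2)⁻¹ • (u₁ + u₂)‖ ^ 2 ≤ ε * (3 + 2 * Real.sqrt 2) := by
    rw [expand]
    have h1' : Real.sqrt 2 * (1 / Real.sqrt 2) = 1 := by field_simp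
    nlinarith [hs2pos.le]
  calc ‖w - (Real.sqrt 2)⁻¹ • (u₁ + u₂)‖
      = Real.sqrt (‖w - (Real.sqrt 2)⁻¹ • (u₁ + u₂)‖ ^ 2) := by
        rw [Real.sqrt_sq (norm_nonneg _)]
    _ ≤ Real.sqrt (ε * (3 + 2 * Real.sqrt 2)) := Real.sqrt_le_sqrt key
end
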